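/- arXiv:1001.0078 — 3 statements merged into one kernel-verified Lean document; each statement's English description precedes it below -/
import Mathlib

section
/- Let Γ₁, Γ₂ be M×N complex matrices with r_max = max_{(α,β)≠(0,0)} rank(αΓ₁ + βΓ₂) and r_min = min_{(α,β)≠(0,0)} rank(αΓ₁ + βΓ₂). Then there exist two linearly independent vectors (t₁₁, t₁₂), (t₂₁, t₂₂) ∈ ℂ² (i.e., an invertible 2×2 matrix T) such that rank(t₁₁Γ₁ + t₁₂Γ₂) = r_max and rank(t₂₁Γ₁ + t₂₂Γ₂) = r_min. Hence every pair in C_{n,l} is SLOCC equivalent to a pair (Γ₁', Γ₂') with rank(Γ₁') = n and rank(Γ₂') = l. -/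
open Matrix

/-- The set of ranks attained by the matrix pencil
{αΓ₁ + βΓ₂ : (α,β) ∈ ℂ² \ {(0,0)}}. -/
def pencilRankSet {M N : ℕ} (Γ₁ Γ₂ : Matrix (Fin M) (Fin N) ℂ) : Set ℕ :=
  {r | ∃ α β : ℂ, (α ≠ 0 ∨ β ≠ 0) ∧ (α • Γ₁ + β • Γ₂).rank = r}

lemma rank_smul_aux {M N : ℕ} (c : ℂ) (hc : c ≠ 0) (A : Matrix (Fin M) (Fin N) ℂ) :
    (c • A).rank = A.rank := by
  have h1 : c • A = (c • (1 : Matrix (Fin M) (Fin M) ℂ)) * A := by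
    rw [Matrix.smul_mul, Matrix.one_mul]
  rw [h1]
  apply Matrix.rank_mul_eq_right_of_isUnit_det
  simp [Matrix.det_smul, hc]

/-- There is an invertible 2×2 matrix T whose rows realize
r_max and r_min of the pencil; hence every pair in C_{n,l} is SLOCC
equivalent to a pair (Γ₁', Γ₂') with rank(Γ₁') = n and rank(Γ₂') = l. -/
theorem stmt_6 (M N : ℕ) (hM : 0 < M) (hMN : M ≤ N)
    (Γ₁ Γ₂ : Matrix (Fin M) (Fin N) ℂ) :
    (∃ T : Matrix (Fin 2) (Fin 2) ℂ, IsUnit T ∧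
      (T 0 0 • Γ₁ + T 0 1 • Γ₂).rank = sSup (pencilRankSet Γ₁ Γ₂) ∧
      (T 1 0 • Γ₁ + T 1 1 • Γ₂).rank = sInf (pencilRankSet Γ₁ Γ₂)) ∧
    (∃ (T : Matrix (Fin 2) (Fin 2) ℂ) (P : Matrix (Fin M) (Fin M) ℂ)
        (Q : Matrix (Fin N) (Fin N) ℂ),
      IsUnit T ∧ IsUnit P ∧ IsUnit Q ∧
      (T 0 0 • (P * Γ₁ * Q) + T 0 1 • (P * Γ₂ * Q)).rank = sSup (pencilRankSet Γ₁ Γ₂) ∧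
      (T 1 0 • (P * Γ₁ * Q) + T 1 1 • (P * Γ₂ * Q)).rank = sInf (pencilRankSet Γ₁ Γ₂)) := by
  set S := pencilRankSet Γ₁ Γ₂ with hS
  have hne : S.Nonempty := ⟨Γ₁.rank, 1, 0, Or.inl one_ne_zero, by simp⟩
  have hbdd : BddAbove S := by
    refine ⟨M, fun r hr => ?_⟩
    obtain ⟨α, β, -, hrank⟩ := hr
    rw [← hrank]
    simpa using Matrix.rank_le_card_height (α • Γ₁ + β • Γ₂)
  have hsup_mem : sSup S ∈ S := Nat.sSup_mem hne hbdd
  have hinf_mem : sInf S ∈ S := Nat.sInf_mem hne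
  obtain ⟨α, β, hαβ, hαβr⟩ := hsup_mem
  obtain ⟨γ, δ, hγδ, hγδr⟩ := hinf_mem
  have key : ∃ T : Matrix (Fin 2) (Fin 2) ℂ, IsUnit T ∧
      (T 0 0 • Γ₁ + T 0 1 • Γ₂).rank = sSup S ∧
      (T 1 0 • Γ₁ + T 1 1 • Γ₂).rank = sInf S := by
    by_cases h : sSup S = sInf S
    · refine ⟨1, isUnit_one, ?_, ?_⟩
      · have h1 : Γ₁.rank ∈ S := ⟨1, 0, Or.inl one_ne_zero, by simp⟩
        have := le_csSup hbdd h1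
        have := Nat.sInf_le h1
        simp only [Matrix.one_apply_eq, Matrix.one_apply_ne (by decide : (0:Fin 2) ≠ 1),
          one_smul, zero_smul, add_zero]
        omega
      · have h2 : Γ₂.rank ∈ S := ⟨0, 1, Or.inr one_ne_zero, by simp⟩
        have := le_csSup hbdd h2
        have := Nat.sInf_le h2
        simp only [Matrix.one_apply_eq, Matrix.one_apply_ne (by decide : (1:Fin 2) ≠ 0),
          one_smul, zero_smul, zero_add]
        omega
    · refine ⟨!![α, β; γ, δ], ?_, ?_, ?_⟩
      · rw [Matrix.isUnit_iff_isUnit_det, Matrix.det_fin_two_of, isUnit_iff_ne_zero]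
        intro hdet
        have hd : α * δ = β * γ := by linear_combination hdet
        -- proportionality: get c ≠ 0 with γ = c*α, δ = c*β
        obtain ⟨c, hc, hγ, hδ⟩ : ∃ c : ℂ, c ≠ 0 ∧ γ = c * α ∧ δ = c * β := by
          rcases hαβ with hα | hβ
          · have hδ' : δ = (γ / α) * β := by field_simp; linear_combination hd
            refine ⟨γ / α, ?_, by field_simp, hδ'⟩
            intro hc0
            have hγ0 : γ = 0 := by
              field_simp at hc0; simpa using hc0
            rcases hγδ with h' | h'
            · exact h' hγ0
            · exact h' (by rw [hδ', hc0, zero_mul])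
          · have hγ' : γ = (δ / β) * α := by field_simp; linear_combination -hd
            refine ⟨δ / β, ?_, hγ', by field_simp⟩
            intro hc0
            have hδ0 : δ = 0 := by field_simp at hc0; simpa using hc0
            rcases hγδ with h' | h'
            · exact h' (by rw [hγ', hc0, zero_mul])
            · exact h' hδ0
        apply h
        rw [← hαβr, ← hγδr, hγ, hδ]
        have : (c * α) • Γ₁ + (c * β) • Γ₂ = c • (α • Γ₁ + β • Γ₂) := by
          simp [smul_smul, smul_add]
        rw [this, rank_smul_aux c hc]
      · simpa using hαβr
      · simpa using hγδr
  refine ⟨key, ?_⟩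
  obtain ⟨T, hT, h1, h2⟩ := key
  exact ⟨T, 1, 1, hT, isUnit_one, isUnit_one, by simpa using h1, by simpa using h2⟩
end

section
/- Let M < N, Γ₁ = (I_M | 0_{M×(N−M)}), and Γ₂ = (A | B) with B of size M×(N−M) and r = rank(B). Then there exist P ∈ GL_M(ℂ) and Q ∈ GL_N(ℂ) such that P Γ₁ Q = Γ₁ and P Γ₂ Q has the block form [[A', B', 0_{(M−r)×(N−M)}], [0_{r×(M−r)}, 0_{r×r}, E']] with respect to the row partition M = (M−r) + r and column partition N = (M−r) + r + (N−M), where A' is an (M−r)×(M−r) complex matrix, B' is an (M−r)×r complex matrix, and E' = (0_{r×(N−M−r)} | I_r). -/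
open Matrix

lemma rank_normal_form (m r s : ℕ)
    (B : Matrix (Fin m ⊕ Fin r) (Fin s ⊕ Fin r) ℂ) (hB : B.rank = r) :
    ∃ (P : Matrix (Fin m ⊕ Fin r) (Fin m ⊕ Fin r) ℂ)
      (R : Matrix (Fin s ⊕ Fin r) (Fin s ⊕ Fin r) ℂ),
      IsUnit P ∧ IsUnit R ∧
      P * B * R = Matrix.fromBlocks 0 0 0 (1 : Matrix (Fin r) (Fin r) ℂ) := by
  set f := B.mulVecLin with hf
  have hrank : Module.finrank ℂ (LinearMap.range f) = r := hB
  have hVdim : Module.finrank ℂ ((Fin s ⊕ Fin r) → ℂ) = s + r := by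
    simp [Module.finrank_pi]
  have hWdim : Module.finrank ℂ ((Fin m ⊕ Fin r) → ℂ) = m + r := by
    simp [Module.finrank_pi]
  have hker : Module.finrank ℂ (LinearMap.ker f) = s := by
    have := LinearMap.finrank_range_add_finrank_ker f
    rw [hrank, hVdim] at this
    omega
  obtain ⟨U, hU⟩ := Submodule.exists_isCompl (LinearMap.ker f)
  obtain ⟨Wc, hWc⟩ := Submodule.exists_isCompl (LinearMap.range f)
  have hUdim : Module.finrank ℂ U = r := by
    have := Submodule.finrank_add_eq_of_isCompl hU
    rw [hker, hVdim] at this; omega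
  have hWcdim : Module.finrank ℂ Wc = m := by
    have := Submodule.finrank_add_eq_of_isCompl hWc
    rw [hrank, hWdim] at this; omega
  let bk : Module.Basis (Fin s) ℂ (LinearMap.ker f) := Module.finBasisOfFinrankEq ℂ _ hker
  let bu : Module.Basis (Fin r) ℂ U := Module.finBasisOfFinrankEq ℂ _ hUdim
  let bc : Module.Basis (Fin m) ℂ Wc := Module.finBasisOfFinrankEq ℂ _ hWcdim
  have hinj : Function.Injective (f.domRestrict U) :=
    LinearMap.injective_domRestrict_iff.mpr hU.symm.disjoint
  have hrangeeq : LinearMap.range (f.domRestrict U) = LinearMap.range f := by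
    rw [LinearMap.range_domRestrict]
    apply le_antisymm (LinearMap.map_le_range)
    intro y hy
    obtain ⟨x, rfl⟩ := hy
    obtain ⟨k, u, hk, hu', rfl⟩ : ∃ k u, k ∈ LinearMap.ker f ∧ u ∈ U ∧ k + u = x := by
      have hx : x ∈ (LinearMap.ker f ⊔ U) := by rw [hU.sup_eq_top]; trivial
      obtain ⟨k, hk, u, hu', rfl⟩ := Submodule.mem_sup.mp hx
      exact ⟨k, u, hk, hu', rfl⟩
    have : f (k + u) = f u := by
      simp [map_add, LinearMap.mem_ker.mp hk]
    rw [this]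
    exact Submodule.mem_map_of_mem hu'
  let e : U ≃ₗ[ℂ] LinearMap.range f :=
    (LinearEquiv.ofInjective (f.domRestrict U) hinj).trans (LinearEquiv.ofEq _ _ hrangeeq)
  have he : ∀ u : U, (e u : (Fin m ⊕ Fin r) → ℂ) = f u := fun u => rfl
  let br : Module.Basis (Fin r) ℂ (LinearMap.range f) := bu.map e
  let basV : Module.Basis (Fin s ⊕ Fin r) ℂ ((Fin s ⊕ Fin r) → ℂ) :=
    (bk.prod bu).map (Submodule.prodEquivOfIsCompl _ _ hU)
  let basW : Module.Basis (Fin m ⊕ Fin r) ℂ ((Fin m ⊕ Fin r) → ℂ) :=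
    (bc.prod br).map (Submodule.prodEquivOfIsCompl _ _ hWc.symm)
  have hbasV_inl : ∀ j, basV (Sum.inl j) = (bk j : (Fin s ⊕ Fin r) → ℂ) := by
    intro j
    simp [basV, Module.Basis.prod_apply, Submodule.coe_prodEquivOfIsCompl']
  have hbasV_inr : ∀ j, basV (Sum.inr j) = (bu j : (Fin s ⊕ Fin r) → ℂ) := by
    intro j
    simp [basV, Module.Basis.prod_apply, Submodule.coe_prodEquivOfIsCompl']
  have hbasW_inr : ∀ j, basW (Sum.inr j) = (br j : (Fin m ⊕ Fin r) → ℂ) := by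
    intro j
    simp [basW, Module.Basis.prod_apply, Submodule.coe_prodEquivOfIsCompl']
  have hM : LinearMap.toMatrix basV basW f =
      Matrix.fromBlocks 0 0 0 (1 : Matrix (Fin r) (Fin r) ℂ) := by
    ext i j
    rcases j with j | j
    · rw [LinearMap.toMatrix_apply, hbasV_inl]
      have : f (bk j : (Fin s ⊕ Fin r) → ℂ) = 0 := (bk j).2
      rw [this, map_zero]
      rcases i with i | i <;> simp
    · rw [LinearMap.toMatrix_apply, hbasV_inr]
      have : f (bu j : (Fin s ⊕ Fin r) → ℂ) = basW (Sum.inr j) := by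
        rw [hbasW_inr]
        simp only [br, Module.Basis.map_apply]
        exact (he (bu j)).symm
      rw [this, Module.Basis.repr_self]
      rcases i with i | i <;>
        simp [Finsupp.single_apply, Matrix.one_apply, eq_comm]
  -- B as toMatrix w.r.t. standard bases
  have hBmat : LinearMap.toMatrix (Pi.basisFun ℂ (Fin s ⊕ Fin r))
      (Pi.basisFun ℂ (Fin m ⊕ Fin r)) f = B := by
    ext i j
    simp [LinearMap.toMatrix_apply, hf, Matrix.mulVecLin_apply, Matrix.mulVec_single]
  refine ⟨LinearMap.toMatrix (Pi.basisFun ℂ (Fin m ⊕ Fin r)) basW LinearMap.id,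
      LinearMap.toMatrix basV (Pi.basisFun ℂ (Fin s ⊕ Fin r)) LinearMap.id, ?_, ?_, ?_⟩
  · exact ⟨⟨_, LinearMap.toMatrix basW (Pi.basisFun ℂ (Fin m ⊕ Fin r)) LinearMap.id,
      by rw [← LinearMap.toMatrix_comp basW (Pi.basisFun ℂ (Fin m ⊕ Fin r)) basW
          LinearMap.id LinearMap.id, LinearMap.id_comp, LinearMap.toMatrix_id],
      by rw [← LinearMap.toMatrix_comp (Pi.basisFun ℂ (Fin m ⊕ Fin r)) basW
          (Pi.basisFun ℂ (Fin m ⊕ Fin r)) LinearMap.id LinearMap.id,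
        LinearMap.id_comp, LinearMap.toMatrix_id]⟩, rfl⟩
  · exact ⟨⟨_, LinearMap.toMatrix (Pi.basisFun ℂ (Fin s ⊕ Fin r)) basV LinearMap.id,
      by rw [← LinearMap.toMatrix_comp (Pi.basisFun ℂ (Fin s ⊕ Fin r)) basV
          (Pi.basisFun ℂ (Fin s ⊕ Fin r)) LinearMap.id LinearMap.id,
        LinearMap.id_comp, LinearMap.toMatrix_id],
      by rw [← LinearMap.toMatrix_comp basV (Pi.basisFun ℂ (Fin s ⊕ Fin r)) basV
          LinearMap.id LinearMap.id, LinearMap.id_comp, LinearMap.toMatrix_id]⟩, rfl⟩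
  · rw [← hBmat,
      ← LinearMap.toMatrix_comp (Pi.basisFun ℂ (Fin s ⊕ Fin r))
        (Pi.basisFun ℂ (Fin m ⊕ Fin r)) basW LinearMap.id f, LinearMap.id_comp,
      ← LinearMap.toMatrix_comp basV (Pi.basisFun ℂ (Fin s ⊕ Fin r)) basW f LinearMap.id,
      LinearMap.comp_id, hM]


/-- 'step i' normal form: with row partition M = (M−r) + r
(here m = M−r) and column partition N = (M−r) + r + (N−M) (here
N − M = s + r, so s = N−M−r and M < N means 0 < s + r), if Γ₁ = (I_M | 0)
and Γ₂ = (A | B) with rank(B) = r, then there are invertible P, Q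
preserving Γ₁ and bringing Γ₂ to the quasidiagonal form
[[A', B', 0], [0, 0, E']] with E' = (0 | I_r). -/
theorem stmt_10 (m r s : ℕ) (hsr : 0 < s + r)
    (A : Matrix (Fin m ⊕ Fin r) (Fin m ⊕ Fin r) ℂ)
    (B : Matrix (Fin m ⊕ Fin r) (Fin s ⊕ Fin r) ℂ)
    (hB : B.rank = r)
    (Γ₁ Γ₂ : Matrix (Fin m ⊕ Fin r) ((Fin m ⊕ Fin r) ⊕ (Fin s ⊕ Fin r)) ℂ)
    (hΓ₁ : Γ₁ = Matrix.fromCols (1 : Matrix (Fin m ⊕ Fin r) (Fin m ⊕ Fin r) ℂ)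
                  (0 : Matrix (Fin m ⊕ Fin r) (Fin s ⊕ Fin r) ℂ))
    (hΓ₂ : Γ₂ = Matrix.fromCols A B) :
    ∃ (P : Matrix (Fin m ⊕ Fin r) (Fin m ⊕ Fin r) ℂ)
      (Q : Matrix ((Fin m ⊕ Fin r) ⊕ (Fin s ⊕ Fin r))
             ((Fin m ⊕ Fin r) ⊕ (Fin s ⊕ Fin r)) ℂ),
      IsUnit P ∧ IsUnit Q ∧ P * Γ₁ * Q = Γ₁ ∧
      ∃ (A' : Matrix (Fin m) (Fin m) ℂ) (B' : Matrix (Fin m) (Fin r) ℂ),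
        P * Γ₂ * Q = Matrix.fromCols
          (Matrix.fromBlocks A' B' 0 0)
          (Matrix.fromBlocks 0 0 0 (1 : Matrix (Fin r) (Fin r) ℂ)) := by

  obtain ⟨P, R, hP, hR, hPBR⟩ := rank_normal_form m r s B hB
  obtain ⟨u, rfl⟩ := hP
  obtain ⟨v, rfl⟩ := hR
  set P : Matrix (Fin m ⊕ Fin r) (Fin m ⊕ Fin r) ℂ := ↑u
  set R : Matrix (Fin s ⊕ Fin r) (Fin s ⊕ Fin r) ℂ := ↑v
  set Pinv : Matrix (Fin m ⊕ Fin r) (Fin m ⊕ Fin r) ℂ := ↑u⁻¹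
  set Rinv : Matrix (Fin s ⊕ Fin r) (Fin s ⊕ Fin r) ℂ := ↑v⁻¹
  have hPPinv : P * Pinv = 1 := u.mul_inv
  have hPinvP : Pinv * P = 1 := u.inv_mul
  have hRRinv : R * Rinv = 1 := v.mul_inv
  have hRinvR : Rinv * R = 1 := v.inv_mul
  set D : Matrix (Fin m ⊕ Fin r) (Fin m ⊕ Fin r) ℂ := P * A * Pinv with hD
  set C : Matrix (Fin s ⊕ Fin r) (Fin m ⊕ Fin r) ℂ :=
    Matrix.fromBlocks 0 0 (-(D.toBlocks₂₁)) (-(D.toBlocks₂₂)) with hC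
  set E : Matrix (Fin m ⊕ Fin r) (Fin s ⊕ Fin r) ℂ := Matrix.fromBlocks 0 0 0 1 with hE
  have hDEC : D + E * C =
      Matrix.fromBlocks D.toBlocks₁₁ D.toBlocks₁₂ 0 0 := by
    rw [hE, hC, Matrix.fromBlocks_multiply]
    conv_lhs => rw [← Matrix.fromBlocks_toBlocks D]
    rw [Matrix.fromBlocks_add]
    congr 1 <;> simp
  set Q : Matrix ((Fin m ⊕ Fin r) ⊕ (Fin s ⊕ Fin r))
      ((Fin m ⊕ Fin r) ⊕ (Fin s ⊕ Fin r)) ℂ :=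
    Matrix.fromBlocks Pinv 0 (R * C) R with hQ
  set Qinv : Matrix ((Fin m ⊕ Fin r) ⊕ (Fin s ⊕ Fin r))
      ((Fin m ⊕ Fin r) ⊕ (Fin s ⊕ Fin r)) ℂ :=
    Matrix.fromBlocks P 0 (-(C * P)) Rinv with hQinv
  have hQQinv : Q * Qinv = 1 := by
    rw [hQ, hQinv, Matrix.fromBlocks_multiply, ← Matrix.fromBlocks_one]
    congr 1 <;> simp [hPinvP, hRRinv, Matrix.mul_assoc]
  have hQinvQ : Qinv * Q = 1 := by
    rw [hQ, hQinv, Matrix.fromBlocks_multiply, ← Matrix.fromBlocks_one]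
    congr 1 <;>
      simp [hPPinv, hRinvR, ← Matrix.mul_assoc, Matrix.mul_assoc _ P Pinv,
        Matrix.mul_assoc Rinv R C]
  refine ⟨P, Q, ⟨u, rfl⟩, ⟨⟨Q, Qinv, hQQinv, hQinvQ⟩, rfl⟩, ?_, D.toBlocks₁₁, D.toBlocks₁₂, ?_⟩
  · rw [hΓ₁, Matrix.mul_fromCols, Matrix.mul_one, Matrix.mul_zero, hQ,
      Matrix.fromCols_mul_fromBlocks]
    simp [hPPinv]
  · rw [hΓ₂, Matrix.mul_fromCols, hQ, Matrix.fromCols_mul_fromBlocks]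
    have h1 : P * A * Pinv + P * B * (R * C) = Matrix.fromBlocks D.toBlocks₁₁ D.toBlocks₁₂ 0 0 := by
      rw [← hDEC, ← hD, ← Matrix.mul_assoc (P * B) R C, hPBR]
    have h2 : P * A * (0 : Matrix (Fin m ⊕ Fin r) (Fin s ⊕ Fin r) ℂ) + P * B * R = E := by
      rw [Matrix.mul_zero, zero_add, hPBR]
    rw [h1, h2, hE]
end

section
/- Let N ≥ 2M, Γ₁ = (I_M | 0_{M×(N−M)}), and Γ₂ = (A | B) an M×N complex matrix whose right block B (of size M×(N−M)) has full row rank M. Then there exist P ∈ GL_M(ℂ) and Q ∈ GL_N(ℂ) such that P Γ₁ Q = (I_M | 0_{M×(N−2M)} | 0_{M×M}) and P Γ₂ Q = (0_{M×M} | 0_{M×(N−2M)} | I_M). In particular, when N > 2M the transformed state has N − 2M zero columns in both coefficient matrices, so the state is not a truly entangled 2×M×N state but reduces to a 2×M×2M state. -/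
open Matrix

/-- For N ≥ 2M (here N = M + k + M with k = N − 2M ≥ 0), if
Γ₁ = (I_M | 0 | 0) and Γ₂ = (A | B) with the right block B of full row
rank M, then there exist invertible P, Q with
P Γ₁ Q = (I_M | 0 | 0) and P Γ₂ Q = (0 | 0 | I_M). -/
theorem stmt_11 (M k : ℕ) (hM : 0 < M)
    (A : Matrix (Fin M) (Fin M) ℂ) (B : Matrix (Fin M) (Fin k ⊕ Fin M) ℂ)
    (hB : B.rank = M)
    (Γ₁ Γ₂ : Matrix (Fin M) (Fin M ⊕ (Fin k ⊕ Fin M)) ℂ)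
    (hΓ₁ : Γ₁ = Matrix.fromCols (1 : Matrix (Fin M) (Fin M) ℂ)
                  (0 : Matrix (Fin M) (Fin k ⊕ Fin M) ℂ))
    (hΓ₂ : Γ₂ = Matrix.fromCols A B) :
    ∃ (P : Matrix (Fin M) (Fin M) ℂ)
      (Q : Matrix (Fin M ⊕ (Fin k ⊕ Fin M)) (Fin M ⊕ (Fin k ⊕ Fin M)) ℂ),
      IsUnit P ∧ IsUnit Q ∧
      P * Γ₁ * Q = Matrix.fromCols (1 : Matrix (Fin M) (Fin M) ℂ)
        (Matrix.fromCols (0 : Matrix (Fin M) (Fin k) ℂ)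
          (0 : Matrix (Fin M) (Fin M) ℂ)) ∧
      P * Γ₂ * Q = Matrix.fromCols (0 : Matrix (Fin M) (Fin M) ℂ)
        (Matrix.fromCols (0 : Matrix (Fin M) (Fin k) ℂ)
          (1 : Matrix (Fin M) (Fin M) ℂ)) := by
  subst hΓ₁ hΓ₂
  -- the range of B.mulVecLin is everything
  have hrange : LinearMap.range B.mulVecLin = ⊤ := by
    apply Submodule.eq_top_of_finrank_eq
    rw [Module.finrank_pi]
    simpa [Matrix.rank] using hB
  -- a right inverse C of B
  obtain ⟨g, hg⟩ := B.mulVecLin.exists_rightInverse_of_surjective hrange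
  set C : Matrix (Fin k ⊕ Fin M) (Fin M) ℂ := LinearMap.toMatrix' g with hC
  have hBC : B * C = 1 := by
    apply Matrix.toLin'.injective
    rw [Matrix.toLin'_mul, Matrix.toLin'_one, hC, Matrix.toLin'_toMatrix',
      Matrix.toLin'_apply', hg]
  -- kernel basis
  have hker : Module.finrank ℂ (LinearMap.ker B.mulVecLin) = k := by
    have h1 := LinearMap.finrank_range_add_finrank_ker B.mulVecLin
    rw [hrange] at h1
    simp only [Module.finrank_pi, Fintype.card_sum, Fintype.card_fin] at h1
    rw [finrank_top, Module.finrank_pi] at h1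
    simp only [Fintype.card_sum, Fintype.card_fin] at h1
    omega
  set b := Module.finBasisOfFinrankEq ℂ (LinearMap.ker B.mulVecLin) hker with hb
  set K : Matrix (Fin k ⊕ Fin M) (Fin k) ℂ := Matrix.of (fun i j => (b j).1 i) with hK
  have hBK : B * K = 0 := by
    ext i j
    have h0 : B.mulVecLin (b j).1 = 0 := (b j).2
    have h1 := congrFun h0 i
    simp only [Matrix.mulVecLin_apply, Matrix.mulVec, dotProduct, Pi.zero_apply] at h1
    simp only [Matrix.mul_apply, hK, Matrix.of_apply, Matrix.zero_apply]
    exact h1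
  set Q22 : Matrix (Fin k ⊕ Fin M) (Fin k ⊕ Fin M) ℂ := fromCols K C with hQ22
  have hQ22unit : IsUnit Q22 := by
    rw [← Matrix.mulVec_surjective_iff_isUnit]
    intro v
    set w : (Fin k ⊕ Fin M) → ℂ := v - C *ᵥ (B *ᵥ v) with hw
    have hwker : w ∈ LinearMap.ker B.mulVecLin := by
      have h5 : B *ᵥ (C *ᵥ (B *ᵥ v)) = B *ᵥ v := by
        rw [Matrix.mulVec_mulVec, hBC, Matrix.one_mulVec]
      simp only [LinearMap.mem_ker, Matrix.mulVecLin_apply, hw, Matrix.mulVec_sub, h5, sub_self]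
    refine ⟨Sum.elim (b.repr ⟨w, hwker⟩) (B *ᵥ v), ?_⟩
    rw [hQ22, fromCols_mulVec_sumElim]
    have hKw : K *ᵥ (b.repr ⟨w, hwker⟩) = w := by
      have := b.sum_repr ⟨w, hwker⟩
      have h2 := congrArg Subtype.val this
      ext i
      have h3 := congrFun h2 i
      simp only [AddSubmonoidClass.coe_finset_sum, SetLike.val_smul, Finset.sum_apply,
        Pi.smul_apply, smul_eq_mul] at h3
      rw [Matrix.mulVec, dotProduct]
      rw [← h3]
      exact Finset.sum_congr rfl (fun j _ => by simp [hK, mul_comm])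
    rw [hKw, hw]
    abel
  refine ⟨1, fromBlocks 1 0 (-(C * A)) Q22, isUnit_one, ?_, ?_, ?_⟩
  · rw [Matrix.isUnit_fromBlocks_zero₁₂]
    exact ⟨isUnit_one, hQ22unit⟩
  · rw [Matrix.one_mul, fromCols_mul_fromBlocks]
    simp [fromCols_zero]
  · rw [Matrix.one_mul, fromCols_mul_fromBlocks, hQ22, Matrix.mul_fromCols, hBK, hBC]
    rw [Matrix.mul_neg, ← Matrix.mul_assoc, hBC]
    simp
end
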